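/- Let 𝔼 = (E_1,…,E_n) be a full exceptional collection in D and define F_j = L_{E_1}⋯L_{E_{j−1}}(E_j) for 1 ≤ j ≤ n. Then 𝔽 = (F_n,…,F_1) is a full exceptional collection and Hom^k(E_i, F_j) = C if i = j and k = 0, and vanishes otherwise. Conversely, any sequence (F_n,…,F_1) satisfying these orthogonality conditions is given by this formula. -/

import Mathlib

open CategoryTheory Limits Pretriangulated

universe v u

variable (C : Type u) [Category.{v} C] [Preadditive C] [HasZeroObject C]
  [HasShift C ℤ] [∀ n : ℤ, (CategoryTheory.shiftFunctor C n).Additive] [Pretriangulated C]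
  [CategoryTheory.Linear ℂ C]

/-- All graded morphisms from `X` to `Y` vanish. -/
def NoHoms (X Y : C) : Prop := ∀ n : ℤ, ∀ f : X ⟶ Y⟦n⟧, f = 0

/-- The category `C` is of finite type: total graded Hom spaces are finite dimensional. -/
def FiniteType : Prop :=
  ∀ X Y : C, (∀ n : ℤ, FiniteDimensional ℂ (X ⟶ Y⟦n⟧)) ∧
    {n : ℤ | ∃ f : X ⟶ Y⟦n⟧, f ≠ 0}.Finite

/-- An exceptional object: `Hom^•(E,E) = ℂ`, concentrated in degree `0`. -/
def IsExceptional (E : C) : Prop :=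
  (∀ n : ℤ, n ≠ 0 → ∀ f : E ⟶ E⟦n⟧, f = 0) ∧ Module.finrank ℂ (E ⟶ E) = 1

/-- Membership in the smallest strictly full triangulated subcategory containing `S`. -/
inductive genTriang (S : Set C) : C → Prop
  | of (X : C) (hX : X ∈ S) : genTriang S X
  | isZero (X : C) (hX : IsZero X) : genTriang S X
  | iso {X Y : C} (e : X ≅ Y) (hX : genTriang S X) : genTriang S Y
  | shift (X : C) (n : ℤ) (hX : genTriang S X) : genTriang S (X⟦n⟧)
  | ext₂ (T : Triangle C) (hT : T ∈ distTriang C) (h₁ : genTriang S T.obj₁)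
      (h₃ : genTriang S T.obj₃) : genTriang S T.obj₂

/-- The left orthogonal `^⊥S`. -/
def leftOrth (S : Set C) : Set C := {X | ∀ Y ∈ S, NoHoms C X Y}

/-- The right orthogonal `S^⊥`. -/
def rightOrth (S : Set C) : Set C := {X | ∀ Y ∈ S, NoHoms C Y X}

/-- `Y` is the left mutation of `X` through (the subcategory generated by) `S`. -/
def IsLeftMutation (S : Set C) (X Y : C) : Prop :=
  X ∈ leftOrth C S ∧ Y ∈ rightOrth C S ∧
    ∃ (A : C) (f : A ⟶ X) (g : X ⟶ Y) (h : Y ⟶ A⟦(1:ℤ)⟧),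
      genTriang C S A ∧ Triangle.mk f g h ∈ distTriang C

/-- `X` is the right mutation of `Y` through (the subcategory generated by) `S`. -/
def IsRightMutation (S : Set C) (X Y : C) : Prop :=
  X ∈ leftOrth C S ∧ Y ∈ rightOrth C S ∧
    ∃ (A : C) (f : X ⟶ Y) (g : Y ⟶ A) (h : A ⟶ X⟦(1:ℤ)⟧),
      genTriang C S A ∧ Triangle.mk f g h ∈ distTriang C

/-- `IterLeftMut l X Y` : `Y ≅ L_{E₁} ⋯ L_{E_k} (X)` where `l = [E₁, …, E_k]`. -/
def IterLeftMut : List C → C → C → Prop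
  | [], X, Y => Nonempty (X ≅ Y)
  | (E :: t), X, Y => ∃ Z, IterLeftMut t X Z ∧ IsLeftMutation C {E} Z Y

/-- `IterRightMut l Y X` : `X ≅ R_{E_k} ⋯ R_{E₁} (Y)` where `l = [E₁, …, E_k]`. -/
def IterRightMut : List C → C → C → Prop
  | [], Y, X => Nonempty (Y ≅ X)
  | (E :: t), Y, X => ∃ Z, IsRightMutation C {E} Z Y ∧ IterRightMut t Z X

/-- `E 0, …, E (n-1)` is an exceptional collection. -/
def ExcCollection (n : ℕ) (E : ℕ → C) : Prop :=
  (∀ i < n, IsExceptional C (E i)) ∧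
    ∀ i j, i < j → j < n → NoHoms C (E j) (E i)

/-- The set of objects of the collection `E 0, …, E (n-1)`. -/
def collSet (n : ℕ) (E : ℕ → C) : Set C := {X | ∃ i < n, X = E i}


/-- The orthogonality conditions (freddie) characterising the dual collection:
`Hom^k(E i, G j) = ℂ` if `i = j` and `k = 0`, and `0` otherwise. -/
def DualOrtho (n : ℕ) (E G : ℕ → C) : Prop :=
  ∀ i < n, ∀ j < n,
    (i = j → Module.finrank ℂ (E i ⟶ G j) = 1 ∧
      ∀ k : ℤ, k ≠ 0 → ∀ f : E i ⟶ (G j)⟦k⟧, f = 0) ∧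
    (i ≠ j → ∀ k : ℤ, ∀ f : E i ⟶ (G j)⟦k⟧, f = 0)

section AuxLemmas

set_option linter.unusedSectionVars false

variable {C}

lemma shift_shift_zero {X W : C} (k m : ℤ)
    (h : ∀ v : X ⟶ W⟦k + m⟧, v = 0) (v : X ⟶ (W⟦k⟧)⟦m⟧) : v = 0 := by
  have h1 : v ≫ ((shiftFunctorAdd C k m).symm.app W).hom = 0 := h _
  rw [← cancel_mono ((shiftFunctorAdd C k m).symm.app W).hom, zero_comp]
  exact h1

lemma zero_of_noHoms {X W : C} (h : NoHoms C X W) (f : X ⟶ W) : f = 0 := by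
  have h1 : f ≫ ((shiftFunctorZero C ℤ).symm.app W).hom = 0 := h 0 _
  rw [← cancel_mono ((shiftFunctorZero C ℤ).symm.app W).hom, zero_comp]
  exact h1

lemma noHoms_shift_right {X W : C} (h : NoHoms C X W) (m : ℤ) : NoHoms C X (W⟦m⟧) :=
  fun k v => shift_shift_zero m k (fun u => h (m + k) u) v

lemma noHoms_shift_left {X W : C} (h : NoHoms C X W) (m : ℤ) : NoHoms C (X⟦m⟧) W := by
  intro k f
  have hz : ((shiftFunctorCompIsoId C m (-m) (by omega)).symm.app X).hom ≫
      ((shiftFunctor C (-m)).map f ≫ ((shiftFunctorAdd C k (-m)).symm.app W).hom) = 0 :=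
    h (k + -m) _
  have h0 : (shiftFunctor C (-m)).map f = 0 := by
    rw [← cancel_epi (((shiftFunctorCompIsoId C m (-m) (by omega)).symm.app X).hom),
      ← cancel_mono (((shiftFunctorAdd C k (-m)).symm.app W).hom), comp_zero, zero_comp]
    rw [Category.assoc]
    exact hz
  exact (shiftFunctor C (-m)).map_injective (by rw [h0, Functor.map_zero])

lemma noHoms_iso_right {X Y Y' : C} (e : Y ≅ Y') (h : NoHoms C X Y) : NoHoms C X Y' := by
  intro k f
  have h1 : f ≫ (shiftFunctor C k).map e.inv = 0 := h k _
  rw [← cancel_mono ((shiftFunctor C k).map e.inv), zero_comp]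
  exact h1

lemma noHoms_iso_left {X X' Y : C} (e : X ≅ X') (h : NoHoms C X Y) : NoHoms C X' Y := by
  intro k f
  have h1 : e.hom ≫ f = 0 := h k _
  rw [← cancel_epi e.hom, comp_zero]
  exact h1

lemma equiv_zero {M N : Type*} [AddCommGroup M] [AddCommGroup N] [Module ℂ M] [Module ℂ N]
    (e : M ≃ₗ[ℂ] N) (h : ∀ m : M, m = 0) (x : N) : x = 0 := by
  rw [← e.apply_symm_apply x, h (e.symm x), map_zero]

lemma genTriang_noHoms_left {S : Set C} {W : C} (hS : ∀ E ∈ S, NoHoms C E W)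
    {A : C} (hA : genTriang C S A) : NoHoms C A W := by
  induction hA with
  | of X hX => exact hS X hX
  | isZero X hX => exact fun k f => hX.eq_of_src f 0
  | iso e _ ih => exact noHoms_iso_left e ih
  | shift X m _ ih => exact noHoms_shift_left ih m
  | ext₂ T hT h₁ h₃ ih₁ ih₃ =>
      intro k f
      obtain ⟨g, hg⟩ := Pretriangulated.Triangle.yoneda_exact₂ T hT f (ih₁ k _)
      rw [hg, ih₃ k g, comp_zero]

lemma genTriang_noHoms_right {S : Set C} {W : C} (hS : ∀ E ∈ S, NoHoms C W E)
    {A : C} (hA : genTriang C S A) : NoHoms C W A := by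
  induction hA with
  | of X hX => exact hS X hX
  | isZero X hX =>
      intro k f
      have h0 : 𝟙 X = (0 : X ⟶ X) := hX.eq_of_src _ _
      have h1 : 𝟙 (X⟦k⟧) = 0 := by
        have h2 := congrArg (shiftFunctor C k).map h0
        rwa [CategoryTheory.Functor.map_id, Functor.map_zero] at h2
      rw [← Category.comp_id f, h1, comp_zero]
  | iso e _ ih => exact noHoms_iso_right e ih
  | shift X m _ ih => exact noHoms_shift_right ih m
  | ext₂ T hT h₁ h₃ ih₁ ih₃ =>
      intro k f
      have hdist := Pretriangulated.Triangle.shift_distinguished T hT k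
      rw [Pretriangulated.Triangle.shiftFunctor_eq] at hdist
      have hf : f ≫ ((Pretriangulated.Triangle.shiftFunctor C k).obj T).mor₂ = 0 := by
        have : f ≫ ((Pretriangulated.Triangle.shiftFunctor C k).obj T).mor₂
            = f ≫ (k.negOnePow • (shiftFunctor C k).map T.mor₂) := rfl
        rw [this, Linear.comp_units_smul, ih₃ k (f ≫ (shiftFunctor C k).map T.mor₂), smul_zero]
        rfl
      obtain ⟨g, hg⟩ := Pretriangulated.Triangle.coyoneda_exact₂ _ hdist f hf
      have hg0 : g = 0 := ih₁ k g
      rw [hg, hg0, zero_comp]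
      rfl

lemma genTriang_mono {S S' : Set C} (hSS : ∀ E ∈ S, genTriang C S' E) {X : C}
    (hX : genTriang C S X) : genTriang C S' X := by
  induction hX with
  | of X hX => exact hSS X hX
  | isZero X hX => exact genTriang.isZero X hX
  | iso e _ ih => exact genTriang.iso e ih
  | shift X m _ ih => exact genTriang.shift X m ih
  | ext₂ T hT _ _ ih₁ ih₃ => exact genTriang.ext₂ T hT ih₁ ih₃

lemma cov_bij {W : C} {T : Pretriangulated.Triangle C} (hT : T ∈ distTriang C)
    (h1 : ∀ f : W ⟶ T.obj₁, f = 0) (h1' : ∀ f : W ⟶ T.obj₁⟦(1 : ℤ)⟧, f = 0) :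
    Function.Bijective (fun f : W ⟶ T.obj₂ => f ≫ T.mor₂) := by
  constructor
  · intro f₁ f₂ hf
    have hf' : f₁ ≫ T.mor₂ = f₂ ≫ T.mor₂ := hf
    have hsub : (f₁ - f₂) ≫ T.mor₂ = 0 := by
      rw [Preadditive.sub_comp, hf', sub_self]
    obtain ⟨g, hg⟩ := Pretriangulated.Triangle.coyoneda_exact₂ T hT _ hsub
    rw [h1 g, zero_comp] at hg
    exact sub_eq_zero.mp hg
  · intro u
    obtain ⟨g, hg⟩ := Pretriangulated.Triangle.coyoneda_exact₃ T hT u (h1' _)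
    exact ⟨g, hg.symm⟩

lemma con_bij {W : C} {T : Pretriangulated.Triangle C} (hT : T ∈ distTriang C)
    (h1 : ∀ f : T.obj₁ ⟶ W, f = 0) (h1' : ∀ f : T.obj₁⟦(1 : ℤ)⟧ ⟶ W, f = 0) :
    Function.Bijective (fun f : T.obj₃ ⟶ W => T.mor₂ ≫ f) := by
  constructor
  · intro f₁ f₂ hf
    have hf' : T.mor₂ ≫ f₁ = T.mor₂ ≫ f₂ := hf
    have hsub : T.mor₂ ≫ (f₁ - f₂) = 0 := by
      rw [Preadditive.comp_sub, hf', sub_self]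
    obtain ⟨g, hg⟩ := Pretriangulated.Triangle.yoneda_exact₃ T hT _ hsub
    rw [h1' g, comp_zero] at hg
    exact sub_eq_zero.mp hg
  · intro u
    obtain ⟨g, hg⟩ := Pretriangulated.Triangle.yoneda_exact₂ T hT u (h1 _)
    exact ⟨g, hg.symm⟩

lemma cov_equiv {W : C} {T : Pretriangulated.Triangle C} (hT : T ∈ distTriang C) (k : ℤ)
    (h1 : ∀ f : W ⟶ T.obj₁⟦k⟧, f = 0) (h1' : ∀ f : W ⟶ T.obj₁⟦k + 1⟧, f = 0) :
    Nonempty ((W ⟶ T.obj₂⟦k⟧) ≃ₗ[ℂ] (W ⟶ T.obj₃⟦k⟧)) := by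
  have hdist := Pretriangulated.Triangle.shift_distinguished T hT k
  rw [Pretriangulated.Triangle.shiftFunctor_eq] at hdist
  exact ⟨LinearEquiv.ofBijective
    (Linear.rightComp ℂ W ((Pretriangulated.Triangle.shiftFunctor C k).obj T).mor₂)
    (cov_bij hdist h1 (fun f => shift_shift_zero k 1 h1' f))⟩

lemma iter_cov {W : C} : ∀ (l : List C) {X Y : C}, IterLeftMut C l X Y →
    (∀ E ∈ l, NoHoms C W E) → ∀ k : ℤ, Nonempty ((W ⟶ X⟦k⟧) ≃ₗ[ℂ] (W ⟶ Y⟦k⟧)) := by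
  intro l
  induction l with
  | nil =>
      rintro X Y ⟨e⟩ _ k
      exact ⟨Linear.homCongr ℂ (Iso.refl W) ((shiftFunctor C k).mapIso e)⟩
  | cons Eh t ih =>
      rintro X Y ⟨Z, hZ, hlo, hro, A, a, g, hh, hgen, hdist⟩ hl k
      obtain ⟨e₁⟩ := ih hZ (fun E hE => hl E (List.mem_cons_of_mem _ hE)) k
      have hA : NoHoms C W A := genTriang_noHoms_right (fun E' hE' => by
        rw [Set.mem_singleton_iff] at hE'
        subst hE'
        exact hl _ List.mem_cons_self) hgen
      obtain ⟨e₂⟩ := cov_equiv (T := Pretriangulated.Triangle.mk a g hh) hdist k (hA k) (hA (k + 1))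
      exact ⟨e₁.trans e₂⟩

lemma iter_con : ∀ (l : List C) {X Y : C}, IterLeftMut C l X Y →
    ∃ ε : X ⟶ Y, ∀ W : C, (∀ E ∈ l, NoHoms C E W) →
      Function.Bijective (fun f : Y ⟶ W => ε ≫ f) := by
  intro l
  induction l with
  | nil =>
      rintro X Y ⟨e⟩
      refine ⟨e.hom, fun W _ => ⟨fun f₁ f₂ hf => ?_, fun u => ⟨e.inv ≫ u, by simp⟩⟩⟩
      exact (cancel_epi e.hom).mp hf
  | cons Eh t ih =>
      rintro X Y ⟨Z, hZ, hlo, hro, A, a, g, hh, hgen, hdist⟩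
      obtain ⟨ε, hε⟩ := ih hZ
      refine ⟨ε ≫ g, fun W hW => ?_⟩
      have hA : NoHoms C A W := genTriang_noHoms_left (fun E' hE' => by
        rw [Set.mem_singleton_iff] at hE'
        subst hE'
        exact hW _ List.mem_cons_self) hgen
      have hA1 : NoHoms C (A⟦(1 : ℤ)⟧) W := noHoms_shift_left hA 1
      have b₁ : Function.Bijective (fun f : Y ⟶ W => g ≫ f) :=
        con_bij (T := Pretriangulated.Triangle.mk a g hh) hdist
          (fun u => zero_of_noHoms hA u) (fun u => zero_of_noHoms hA1 u)
      have b₂ := hε W (fun E hE => hW E (List.mem_cons_of_mem _ hE))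
      have heq : (fun f : Y ⟶ W => (ε ≫ g) ≫ f)
          = (fun x : Z ⟶ W => ε ≫ x) ∘ (fun f : Y ⟶ W => g ≫ f) :=
        funext fun f => by simp [Category.assoc]
      rw [heq]
      exact b₂.comp b₁

lemma iter_iso : ∀ (l : List C) {X Y Y' : C}, IterLeftMut C l X Y → (Y ≅ Y') →
    IterLeftMut C l X Y' := by
  intro l
  cases l with
  | nil =>
      rintro X Y Y' ⟨e⟩ e'
      exact ⟨e.trans e'⟩
  | cons Eh t =>
      rintro X Y Y' ⟨Z, hZ, hlo, hro, A, a, g, hh, hgen, hdist⟩ e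
      refine ⟨Z, hZ, hlo, fun Y₀ hY₀ => noHoms_iso_right e (hro Y₀ hY₀),
        A, a, g ≫ e.hom, e.inv ≫ hh, hgen, ?_⟩
      refine Pretriangulated.isomorphic_distinguished _ hdist _ ?_
      exact Pretriangulated.Triangle.isoMk _ _ (Iso.refl _) (Iso.refl _) e.symm
        (by erw [Category.comp_id, Category.id_comp]; rfl)
        (by erw [Category.assoc, e.hom_inv_id, Category.comp_id, Category.id_comp]; rfl)
        (by show (e.inv ≫ hh) ≫ (shiftFunctor C 1).map (𝟙 A) = e.inv ≫ hh; rw [CategoryTheory.Functor.map_id, Category.comp_id])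

lemma iter_append : ∀ (l t : List C) {X Y : C}, IterLeftMut C (l ++ t) X Y →
    ∃ Z, IterLeftMut C t X Z ∧ IterLeftMut C l Z Y := by
  intro l
  induction l with
  | nil => exact fun t X Y hXY => ⟨Y, hXY, ⟨Iso.refl Y⟩⟩
  | cons Eh l' ih =>
      rintro t X Y ⟨Z₁, hZ₁, hmut⟩
      obtain ⟨Z, h₁, h₂⟩ := ih t hZ₁
      exact ⟨Z, h₁, Z₁, h₂, hmut⟩

lemma iter_gen {S : Set C} : ∀ (l : List C) {X Y : C}, IterLeftMut C l X Y →
    genTriang C S Y → (∀ E ∈ l, genTriang C S E) → genTriang C S X := by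
  intro l
  induction l with
  | nil =>
      rintro X Y ⟨e⟩ hY _
      exact genTriang.iso e.symm hY
  | cons Eh t ih =>
      rintro X Y ⟨Z, hZ, hlo, hro, A, a, g, hh, hgen, hdist⟩ hY hl
      have hA : genTriang C S A := genTriang_mono (fun E' hE' => by
        rw [Set.mem_singleton_iff] at hE'
        subst hE'
        exact hl _ List.mem_cons_self) hgen
      have hZgen : genTriang C S Z :=
        genTriang.ext₂ (Pretriangulated.Triangle.mk a g hh) hdist hA hY
      exact ih hZ hZgen (fun E hE => hl E (List.mem_cons_of_mem _ hE))

lemma range_map_split (E : ℕ → C) : ∀ (j i : ℕ), i < j →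
    ∃ t, (List.range j).map E = ((List.range i).map E) ++ (E i :: t) := by
  intro j
  induction j with
  | zero => exact fun i h => absurd h (Nat.not_lt_zero i)
  | succ j ih =>
      intro i hi
      rcases Nat.lt_or_ge i j with h | h
      · obtain ⟨t, ht⟩ := ih i h
        exact ⟨t ++ [E j], by rw [List.range_succ, List.map_append, ht]; simp⟩
      · have hij : i = j := by omega
        subst hij
        exact ⟨[], by rw [List.range_succ, List.map_append]; simp⟩

end AuxLemmas
/-- Let `(E 0, …, E (n-1))` be a full exceptional collection and
`F j = L_{E 0} ⋯ L_{E (j-1)} (E j)`.  Then `(F (n-1), …, F 0)` is a full exceptional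
collection, `Hom^k(E i, F j)` is `ℂ` for `i = j`, `k = 0` and vanishes otherwise; and
conversely any sequence `G` satisfying these orthogonality conditions is given by the
same iterated mutations. -/
theorem dual_collection (hft : FiniteType C) (n : ℕ) (E F : ℕ → C)
    (hE : ExcCollection C n E)
    (hfull : ∀ X : C, genTriang C (collSet C n E) X)
    (hF : ∀ j < n, IterLeftMut C ((List.range j).map E) (E j) (F j)) :
    (ExcCollection C n (fun i => F (n - 1 - i)) ∧
      (∀ X : C, genTriang C (collSet C n F) X)) ∧
    DualOrtho C n E F ∧
    (∀ G : ℕ → C, DualOrtho C n E G →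
      ∀ j < n, IterLeftMut C ((List.range j).map E) (E j) (G j)) := by
  classical
  have hEE : ∀ i j : ℕ, j < i → i < n → NoHoms C (E i) (E j) :=
    fun i j hji hi => hE.2 j i hji hi
  have hmem : ∀ (j : ℕ) (X : C), X ∈ (List.range j).map E → ∃ l, l < j ∧ X = E l := by
    intro j X hX
    obtain ⟨l, hl, rfl⟩ := List.mem_map.1 hX
    exact ⟨l, List.mem_range.1 hl, rfl⟩
  -- orthogonality `Hom(E i, F j) = 0` for `i ≠ j`
  have O1 : ∀ i, i < n → ∀ j, j < n → i ≠ j → NoHoms C (E i) (F j) := by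
    intro i hi j hj hij
    rcases Nat.lt_or_ge i j with hlt | hge
    · obtain ⟨t, ht⟩ := range_map_split E j i hlt
      have hFj := hF j hj
      rw [ht] at hFj
      obtain ⟨Z, hZ₁, hZ₂⟩ := iter_append _ _ hFj
      obtain ⟨Z', -, -, hro, -⟩ := hZ₁
      have hZno : NoHoms C (E i) Z := hro (E i) rfl
      intro k f
      have hWlist : ∀ E' ∈ (List.range i).map E, NoHoms C (E i) E' := by
        intro E' hE'
        obtain ⟨l, hl, rfl⟩ := hmem i E' hE'
        exact hEE i l hl hi
      obtain ⟨e⟩ := iter_cov _ hZ₂ hWlist k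
      exact equiv_zero e (hZno k) f
    · have hlt : j < i := by omega
      intro k f
      have hWlist : ∀ E' ∈ (List.range j).map E, NoHoms C (E i) E' := by
        intro E' hE'
        obtain ⟨l, hl, rfl⟩ := hmem j E' hE'
        exact hEE i l (by omega) hi
      obtain ⟨e⟩ := iter_cov _ (hF j hj) hWlist k
      exact equiv_zero e (hEE i j hlt hi k) f
  -- orthogonality in degree `0` : `Hom(E j, F j) = ℂ`
  have O2 : ∀ j, j < n →
      Module.finrank ℂ (E j ⟶ F j) = 1 ∧ (∀ k : ℤ, k ≠ 0 → ∀ f : E j ⟶ (F j)⟦k⟧, f = 0) := by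
    intro j hj
    have hWlist : ∀ E' ∈ (List.range j).map E, NoHoms C (E j) E' := by
      intro E' hE'
      obtain ⟨l, hl, rfl⟩ := hmem j E' hE'
      exact hEE j l hl hj
    constructor
    · obtain ⟨e⟩ := iter_cov _ (hF j hj) hWlist 0
      have e₁ : (E j ⟶ (E j)⟦(0 : ℤ)⟧) ≃ₗ[ℂ] (E j ⟶ E j) :=
        Linear.homCongr ℂ (Iso.refl _) ((shiftFunctorZero C ℤ).app (E j))
      have e₂ : (E j ⟶ (F j)⟦(0 : ℤ)⟧) ≃ₗ[ℂ] (E j ⟶ F j) :=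
        Linear.homCongr ℂ (Iso.refl _) ((shiftFunctorZero C ℤ).app (F j))
      calc Module.finrank ℂ (E j ⟶ F j)
          = Module.finrank ℂ (E j ⟶ (F j)⟦(0 : ℤ)⟧) := e₂.finrank_eq.symm
        _ = Module.finrank ℂ (E j ⟶ (E j)⟦(0 : ℤ)⟧) := e.finrank_eq.symm
        _ = Module.finrank ℂ (E j ⟶ E j) := e₁.finrank_eq
        _ = 1 := (hE.1 j hj).2
    · intro k hk f
      obtain ⟨e⟩ := iter_cov _ (hF j hj) hWlist k
      exact equiv_zero e ((hE.1 j hj).1 k hk) f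
  have hDO : DualOrtho C n E F := by
    intro i hi j hj
    constructor
    · rintro rfl
      exact O2 i hi
    · intro hij k f
      exact O1 i hi j hj hij k f
  have hEps : ∀ j, j < n → ∃ ε : E j ⟶ F j, ∀ W : C,
      (∀ E' ∈ (List.range j).map E, NoHoms C E' W) →
        Function.Bijective (fun f : F j ⟶ W => ε ≫ f) :=
    fun j hj => iter_con _ (hF j hj)
  -- the dual collection is exceptional
  have hFexc : ∀ j, j < n → IsExceptional C (F j) := by
    intro j hj
    obtain ⟨ε, hε⟩ := hEps j hj
    constructor
    · intro k hk f
      have hb := hε ((F j)⟦k⟧) (by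
        intro E' hE'
        obtain ⟨l, hl, rfl⟩ := hmem j E' hE'
        exact noHoms_shift_right (O1 l (lt_trans hl hj) j hj (Nat.ne_of_lt hl)) k)
      apply hb.1
      show ε ≫ f = ε ≫ 0
      rw [comp_zero]
      exact (O2 j hj).2 k hk _
    · have hb := hε (F j) (fun E' hE' => by
        obtain ⟨l, hl, rfl⟩ := hmem j E' hE'
        exact O1 l (lt_trans hl hj) j hj (Nat.ne_of_lt hl))
      have e : (F j ⟶ F j) ≃ₗ[ℂ] (E j ⟶ F j) :=
        LinearEquiv.ofBijective (Linear.leftComp ℂ (F j) ε) hb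
      rw [e.finrank_eq]
      exact (O2 j hj).1
  have hFho : ∀ a b, a < b → b < n → NoHoms C (F a) (F b) := by
    intro a b hab hb
    obtain ⟨ε, hε⟩ := hEps a (lt_trans hab hb)
    intro k f
    have hbij := hε ((F b)⟦k⟧) (fun E' hE' => by
      obtain ⟨l, hl, rfl⟩ := hmem a E' hE'
      exact noHoms_shift_right (O1 l (by omega) b hb (by omega)) k)
    apply hbij.1
    show ε ≫ f = ε ≫ 0
    rw [comp_zero]
    exact O1 a (by omega) b hb (by omega) k _
  refine ⟨⟨⟨?_, ?_⟩, ?_⟩, hDO, ?_⟩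
  · -- the reversed family is exceptional
    intro i hi
    exact hFexc (n - 1 - i) (by omega)
  · intro i j hij hj
    exact hFho (n - 1 - j) (n - 1 - i) (by omega) (by omega)
  · -- fullness of the dual collection
    have hgenE : ∀ j, j < n → genTriang C (collSet C n F) (E j) := by
      intro j
      induction j using Nat.strong_induction_on with
      | _ j IH =>
        intro hj
        refine iter_gen _ (hF j hj) (genTriang.of _ ⟨j, hj, rfl⟩) ?_
        intro E' hE'
        obtain ⟨l, hl, rfl⟩ := hmem j E' hE'
        exact IH l hl (lt_trans hl hj)
    intro X
    refine genTriang_mono ?_ (hfull X)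
    rintro Y ⟨i, hi, rfl⟩
    exact hgenE i hi
  · -- converse statement
    intro G hG j hj
    obtain ⟨ε, hε⟩ := hEps j hj
    have hGj := (hG j hj j hj).1 rfl
    have hGne : ∀ i, i < n → i ≠ j → ∀ k : ℤ, ∀ f : E i ⟶ (G j)⟦k⟧, f = 0 :=
      fun i hi hij k f => (hG i hi j hj).2 hij k f
    have hbijG := hε (G j) (fun E' hE' => by
      obtain ⟨l, hl, rfl⟩ := hmem j E' hE'
      exact fun k f => hGne l (lt_trans hl hj) (Nat.ne_of_lt hl) k f)
    have hnt : Nontrivial (E j ⟶ G j) :=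
      Module.nontrivial_of_finrank_pos (R := ℂ) (by rw [hGj.1]; norm_num)
    obtain ⟨ψ, hψ⟩ := exists_ne (0 : E j ⟶ G j)
    obtain ⟨φ, hφ₀⟩ := hbijG.2 ψ
    have hφ : ε ≫ φ = ψ := hφ₀
    have hεne : ε ≠ 0 := by
      intro h0
      exact hψ (by rw [← hφ, h0, zero_comp])
    have spanF : ∀ u : E j ⟶ F j, ∃ c : ℂ, c • ε = u :=
      (finrank_eq_one_iff_of_nonzero' ε hεne).1 (O2 j hj).1
    have spanG : ∀ u : E j ⟶ G j, ∃ c : ℂ, c • ψ = u :=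
      (finrank_eq_one_iff_of_nonzero' ψ hψ).1 hGj.1
    obtain ⟨W, gW, hW, hTW⟩ := Pretriangulated.distinguished_cocone_triangle φ
    have hvan : ∀ i, i < n → NoHoms C (E i) W := by
      intro i hi
      have generic : ∀ k : ℤ, (∀ u : E i ⟶ (F j)⟦k⟧, u = 0) →
          (∀ u : E i ⟶ (F j)⟦k + 1⟧, u = 0) →
          (∀ u : E i ⟶ (G j)⟦k⟧, u = 0) → ∀ f : E i ⟶ W⟦k⟧, f = 0 := by
        intro k hA hB hC f
        obtain ⟨e⟩ := cov_equiv (T := Pretriangulated.Triangle.mk φ gW hW) hTW k hA hB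
        exact equiv_zero e hC f
      by_cases hij : i = j
      · subst hij
        intro k f
        by_cases hk0 : k = 0
        · subst hk0
          have hf' : (f ≫ ((shiftFunctorZero C ℤ).app W).hom) ≫ hW = 0 :=
            (O2 i hj).2 1 one_ne_zero _
          obtain ⟨u, hu⟩ := Pretriangulated.Triangle.coyoneda_exact₃
            (Pretriangulated.Triangle.mk φ gW hW) hTW
            (f ≫ ((shiftFunctorZero C ℤ).app W).hom) hf'
          obtain ⟨c, hc⟩ := spanG u
          have hzero : f ≫ ((shiftFunctorZero C ℤ).app W).hom = 0 := by
            have h12 : φ ≫ (Pretriangulated.Triangle.mk φ gW hW).mor₂ = 0 :=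
              Pretriangulated.comp_distTriang_mor_zero₁₂ _ hTW
            erw [hu, ← hc, Linear.smul_comp, ← hφ, Category.assoc, h12, comp_zero, smul_zero]
            rfl
          rw [← cancel_mono ((shiftFunctorZero C ℤ).app W).hom, zero_comp]
          exact hzero
        by_cases hk1 : k = -1
        · subst hk1
          set T : Pretriangulated.Triangle C := Pretriangulated.Triangle.mk φ gW hW with hT
          have hTinv := Pretriangulated.inv_rot_of_distTriang T hTW
          have hTinv2 := Pretriangulated.inv_rot_of_distTriang _ hTinv
          have h12 : T.invRotate.mor₁ ≫ φ = 0 :=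
            Pretriangulated.comp_distTriang_mor_zero₁₂ _ hTinv
          obtain ⟨c, hc⟩ := spanF (f ≫ T.invRotate.mor₁)
          have hacomp : (f ≫ T.invRotate.mor₁) ≫ φ = 0 := by
            erw [Category.assoc, h12, comp_zero]
          have hc0 : c = 0 := by
            by_contra hcne
            apply hψ
            have hsm : c • ψ = 0 := by
              erw [← hφ, ← Linear.smul_comp, hc, hacomp]
            rcases smul_eq_zero.mp hsm with h | h
            · exact absurd h hcne
            · exact h
          have ha0 : f ≫ T.invRotate.invRotate.mor₂ = 0 := by
            have : f ≫ T.invRotate.mor₁ = 0 := by erw [← hc, hc0, zero_smul]; rfl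
            exact this
          obtain ⟨u, hu⟩ := Pretriangulated.Triangle.coyoneda_exact₂ _ hTinv2 f ha0
          have hu0 : u = 0 := hGj.2 (-1) (by norm_num) u
          rw [hu, hu0, zero_comp]
          rfl
        · exact generic k ((O2 i hj).2 k hk0) ((O2 i hj).2 (k + 1) (by omega)) (hGj.2 k hk0) f
      · intro k f
        exact generic k (O1 i hi j hj hij k) (O1 i hi j hj hij (k + 1)) (hGne i hi hij k) f
    have hWzero : IsZero W := by
      have hWW : NoHoms C W W :=
        genTriang_noHoms_left (S := collSet C n E)
          (by rintro E' ⟨i, hi, rfl⟩; exact hvan i hi) (hfull W)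
      rw [IsZero.iff_id_eq_zero]
      exact zero_of_noHoms hWW (𝟙 W)
    have hiso : IsIso φ :=
      (Pretriangulated.Triangle.isZero₃_iff_isIso₁
        (Pretriangulated.Triangle.mk φ gW hW) hTW).1 hWzero
    exact iter_iso _ (hF j hj) (asIso φ)
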